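/- There exists a K×K matrix (for some K ≥ 4) that is simplicial but not affine-independent; concretely, the 4×4 matrix with rows (1,0,0.5,0.5), (0,1,0.5,0.5), (0.5,0.5,1,0), (0.5,0.5,0,1) is simplicial (each row lies outside the convex hull of the other rows) but the signed combination with coefficients (1,1,−1,−1), which sum to zero, of the rows equals the zero vector, so it is not affine-independent. -/

import Mathlib

/-- The 4×4 matrix with rows (1,0,0.5,0.5), (0,1,0.5,0.5), (0.5,0.5,1,0), (0.5,0.5,0,1)
is simplicial (every row lies strictly outside the convex hull of the other rows) but
not affine-independent: the coefficients (1,1,-1,-1), which sum to zero, give the zero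
combination of the rows. -/
theorem simplicial_not_affine_independent_example
    (B : Fin 4 → EuclideanSpace ℝ (Fin 4))
    (hB : B = fun i => (WithLp.toLp 2 (![![(1:ℝ), 0, 0.5, 0.5], ![0, 1, 0.5, 0.5],
        ![0.5, 0.5, 1, 0], ![0.5, 0.5, 0, 1]] i) : EuclideanSpace ℝ (Fin 4))) :
    -- simplicial: each row is at strictly positive distance from the convex hull
    -- of the remaining rows
    (∀ i : Fin 4, ∀ c : Fin 4 → ℝ, (∀ j, 0 ≤ c j) →
      ∑ j ∈ Finset.univ.erase i, c j = 1 →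
      0 < ‖B i - ∑ j ∈ Finset.univ.erase i, c j • B j‖) ∧
    -- not affine-independent, witnessed by λ = (1,1,-1,-1)
    (∃ l : Fin 4 → ℝ, l ≠ 0 ∧ ∑ k, l k = 0 ∧ ∑ k, l k • B k = 0 ∧
      l = ![1, 1, -1, -1]) := by
  subst hB
  constructor
  · intro i c hc hsum
    rw [norm_pos_iff]
    intro h
    have hi : ∀ j : Fin 4, j ≠ i →
        (![![(1:ℝ), 0, 0.5, 0.5], ![0, 1, 0.5, 0.5],
          ![0.5, 0.5, 1, 0], ![0.5, 0.5, 0, 1]] j i) ≤ 0.5 := by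
      intro j hj
      fin_cases i <;> fin_cases j <;> simp_all [Matrix.vecHead, Matrix.vecTail] <;> norm_num
    have hdiag : (![![(1:ℝ), 0, 0.5, 0.5], ![0, 1, 0.5, 0.5],
          ![0.5, 0.5, 1, 0], ![0.5, 0.5, 0, 1]] i i) = 1 := by
      fin_cases i <;> norm_num
    have h0 := congrArg (fun v : EuclideanSpace ℝ (Fin 4) => v i) h
    have hap : ((∑ j ∈ Finset.univ.erase i,
        c j • (WithLp.toLp 2 (![![(1:ℝ), 0, 0.5, 0.5], ![0, 1, 0.5, 0.5],
          ![0.5, 0.5, 1, 0], ![0.5, 0.5, 0, 1]] j) : EuclideanSpace ℝ (Fin 4))) : EuclideanSpace ℝ (Fin 4)) i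
        = ∑ j ∈ Finset.univ.erase i, c j * (![![(1:ℝ), 0, 0.5, 0.5], ![0, 1, 0.5, 0.5],
          ![0.5, 0.5, 1, 0], ![0.5, 0.5, 0, 1]] j i) := by
      rw [WithLp.ofLp_sum, Finset.sum_apply]
      simp [smul_eq_mul]
    have hle : ∑ j ∈ Finset.univ.erase i, c j * (![![(1:ℝ), 0, 0.5, 0.5], ![0, 1, 0.5, 0.5],
          ![0.5, 0.5, 1, 0], ![0.5, 0.5, 0, 1]] j i) ≤ 0.5 := by
      calc _ ≤ ∑ j ∈ Finset.univ.erase i, c j * 0.5 := by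
              apply Finset.sum_le_sum
              intro j hj
              exact mul_le_mul_of_nonneg_left (hi j (Finset.ne_of_mem_erase hj)) (hc j)
        _ = 0.5 := by rw [← Finset.sum_mul, hsum, one_mul]
    simp only [PiLp.sub_apply, PiLp.zero_apply] at h0
    rw [hap, hdiag] at h0
    linarith
  · refine ⟨![1, 1, -1, -1], ?_, by norm_num [Fin.sum_univ_four, Matrix.cons_val_two, Matrix.cons_val_three], ?_, rfl⟩
    · intro h
      have := congrFun h 0
      norm_num at this
    · ext j
      simp [Finset.sum_apply, Fin.sum_univ_four]
      fin_cases j <;> norm_num
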